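/- For indeterminates Y_1,...,Y_n, E_2,...,E_n, F_2,...,F_n and C, the determinant of the n×n matrix whose (i,j) entry is ∏_{k=2}^j (Y_i+F_k)(Y_i−F_k−C) · ∏_{k=j+1}^n (Y_i+E_k)(Y_i−E_k−C) equals ∏_{1≤i<j≤n}(Y_i−Y_j)(C−Y_i−Y_j) · ∏_{2≤i≤j≤n}(F_i−E_j)(F_i+E_j+C). -/

import Mathlib

open Finset Polynomial

namespace K9

variable {S : Type*} [CommRing S]

/-- The column polynomial. -/
noncomputable def pcol (n : ℕ) (A B : ℕ → S) (j : Fin n) : S[X] :=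
  (∏ k ∈ Icc 2 (j.val + 1), (X + C (B k))) * ∏ k ∈ Icc (j.val + 2) n, (X + C (A k))

lemma prod_linear_natDegree_le (s : Finset ℕ) (g : ℕ → S) :
    (∏ k ∈ s, (X + C (g k))).natDegree ≤ s.card := by
  refine le_trans (natDegree_prod_le _ _) ?_
  have := Finset.sum_le_card_nsmul s (fun k => (X + C (g k)).natDegree) 1
    (fun k _ => le_trans (natDegree_add_le _ _) (by simp [Polynomial.natDegree_X_le]))
  simpa using this

lemma pcol_natDegree_lt (n : ℕ) (A B : ℕ → S) (j : Fin n) :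
    (pcol n A B j).natDegree < n := by
  have h1 := prod_linear_natDegree_le (Icc 2 (j.val + 1)) B
  have h2 := prod_linear_natDegree_le (Icc (j.val + 2) n) A
  have := natDegree_mul_le (p := ∏ k ∈ Icc 2 (j.val + 1), (X + C (B k)))
    (q := ∏ k ∈ Icc (j.val + 2) n, (X + C (A k)))
  rw [Nat.card_Icc] at h1 h2
  have hj := j.isLt
  unfold pcol
  omega

lemma pcol_eval (n : ℕ) (A B : ℕ → S) (j : Fin n) (x : S) :
    (pcol n A B j).eval x =
      (∏ k ∈ Icc 2 (j.val + 1), (x + B k)) * ∏ k ∈ Icc (j.val + 2) n, (x + A k) := by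
  simp [pcol, eval_prod]

/-- The coefficient matrix. -/
noncomputable def Tmat (n : ℕ) (A B : ℕ → S) : Matrix (Fin n) (Fin n) S :=
  Matrix.of fun k j => (pcol n A B j).coeff k.val

lemma det_eq_vdm_mul_T (n : ℕ) (A B : ℕ → S) (x : Fin n → S) :
    Matrix.det (Matrix.of fun i j : Fin n =>
      (∏ k ∈ Icc 2 (j.val + 1), (x i + B k)) * ∏ k ∈ Icc (j.val + 2) n, (x i + A k)) =
    (∏ i : Fin n, ∏ j ∈ Ioi i, (x j - x i)) * (Tmat n A B).det := by
  have hM : (Matrix.of fun i j : Fin n =>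
      (∏ k ∈ Icc 2 (j.val + 1), (x i + B k)) * ∏ k ∈ Icc (j.val + 2) n, (x i + A k)) =
      (Matrix.vandermonde x) * Tmat n A B := by
    ext i j
    rw [Matrix.mul_apply]
    rw [Matrix.of_apply, ← pcol_eval n A B j (x i),
      eval_eq_sum_range' (pcol_natDegree_lt n A B j) (x i), ← Fin.sum_univ_eq_sum_range]
    simp [Tmat, Matrix.vandermonde, mul_comm]
  rw [hM, Matrix.det_mul, Matrix.det_vandermonde]


lemma prod_Ioi_reindex {n : ℕ} (i : Fin n) (f : ℕ → S) :
    ∏ j ∈ Ioi i, f (j.val + 1) = ∏ k ∈ Icc (i.val + 2) n, f k := by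
  have h1 : ∏ j ∈ Ioi i, f (j.val + 1) = ∏ m ∈ Ioc i.val (n-1), f (m + 1) := by
    rw [show Ioc i.val (n-1) = Ioo i.val n from by
      ext m; simp only [Finset.mem_Ioc, Finset.mem_Ioo]; omega,
      ← Fin.map_valEmbedding_Ioi, Finset.prod_map]
    rfl
  rw [h1]
  have h2 : Ioc i.val (n-1) = Icc (i.val+1) (n-1) := by
    ext m; simp only [Finset.mem_Ioc, Finset.mem_Icc]; omega
  rw [h2]
  have h3 : (Icc (i.val+1) (n-1)).map (addLeftEmbedding 1) = Icc (i.val+2) n := by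
    rw [Finset.map_add_left_Icc]
    congr 1 <;> [skip; skip] <;> (have := i.isLt; omega)
  rw [← h3, Finset.prod_map]
  exact Finset.prod_congr rfl fun m _ => by simp [addLeftEmbedding_apply, Nat.add_comm]

lemma prod_neg_pair {n : ℕ} (g : Fin n → Fin n → S) :
    (∏ i : Fin n, ∏ j ∈ Ioi i, (-(g i j))) =
      (∏ i : Fin n, ∏ j ∈ Ioi i, (-1 : S)) * ∏ i : Fin n, ∏ j ∈ Ioi i, g i j := by
  rw [← Finset.prod_mul_distrib]
  refine Finset.prod_congr rfl fun i _ => ?_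
  rw [← Finset.prod_mul_distrib]
  exact Finset.prod_congr rfl fun j _ => by ring

lemma sgn_sq {n : ℕ} :
    (∏ i : Fin n, ∏ j ∈ Ioi i, (-1 : S)) * (∏ i : Fin n, ∏ j ∈ Ioi i, (-1 : S)) = 1 := by
  rw [← Finset.prod_mul_distrib]
  refine Finset.prod_eq_one fun i _ => ?_
  rw [← Finset.prod_mul_distrib]
  exact Finset.prod_eq_one fun j _ => by ring

lemma det_Tmat [IsDomain S] (n : ℕ) (A B : ℕ → S)
    (hA : ∀ i j : Fin n, i < j → A (j.val + 1) - A (i.val + 1) ≠ 0) :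
    (Tmat n A B).det = (∏ i : Fin n, ∏ j ∈ Ioi i, (-1 : S)) *
      ∏ i : Fin n, ∏ k ∈ Icc 2 (i.val + 1), (B k - A (i.val + 1)) := by
  set s : S := ∏ i : Fin n, ∏ j ∈ Ioi i, (-1 : S) with hs
  set P : S := ∏ i : Fin n, ∏ k ∈ Icc 2 (i.val + 1), (B k - A (i.val + 1)) with hP
  set V : S := ∏ i : Fin n, ∏ j ∈ Ioi i, (A (j.val + 1) - A (i.val + 1)) with hV
  have key := det_eq_vdm_mul_T n A B (fun i => -A (i.val + 1))
  set M : Matrix (Fin n) (Fin n) S := Matrix.of fun i j : Fin n =>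
      (∏ k ∈ Icc 2 (j.val + 1), (-A (i.val + 1) + B k)) *
        ∏ k ∈ Icc (j.val + 2) n, (-A (i.val + 1) + A k) with hM
  have htri : M.BlockTriangular id := by
    intro i j hij
    have hij' : (j : ℕ) < (i : ℕ) := hij
    have hmem : i.val + 1 ∈ Icc (j.val + 2) n := by
      rw [Finset.mem_Icc]
      have := i.isLt
      omega
    have : (∏ k ∈ Icc (j.val + 2) n, (-A (i.val + 1) + A k)) = 0 :=
      Finset.prod_eq_zero hmem (by ring)
    simp only [hM, Matrix.of_apply, this, mul_zero]
  have hdiag : M.det = P * V := by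
    rw [Matrix.det_of_upperTriangular htri]
    rw [hP, hV, ← Finset.prod_mul_distrib]
    refine Finset.prod_congr rfl fun i _ => ?_
    simp only [hM, Matrix.of_apply]
    congr 1
    · exact Finset.prod_congr rfl fun k _ => by ring
    · exact Eq.trans (Finset.prod_congr rfl fun k _ => by ring)
        (prod_Ioi_reindex i (fun k => A k - A (i.val + 1))).symm
  have hvdm : (∏ i : Fin n, ∏ j ∈ Ioi i,
      ((fun i : Fin n => -A (i.val + 1)) j - (fun i : Fin n => -A (i.val + 1)) i)) = s * V := by
    rw [← prod_neg_pair (fun i j => A (j.val + 1) - A (i.val + 1))]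
    refine Finset.prod_congr rfl fun i _ => Finset.prod_congr rfl fun j _ => by ring
  rw [hdiag, hvdm] at key
  have hVne : V ≠ 0 := by
    rw [hV]
    refine Finset.prod_ne_zero_iff.mpr fun i _ => ?_
    refine Finset.prod_ne_zero_iff.mpr fun j hj => ?_
    exact hA i j (Finset.mem_Ioi.mp hj)
  have hPe : P = s * (Tmat n A B).det := by
    have : P * V = (s * (Tmat n A B).det) * V := by rw [key]; ring
    exact mul_right_cancel₀ hVne this
  calc (Tmat n A B).det = (s * s) * (Tmat n A B).det := by rw [sgn_sq]; ring
    _ = s * P := by rw [hPe]; ring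


lemma det_full [IsDomain S] (n : ℕ) (A B : ℕ → S)
    (hA : ∀ i j : Fin n, i < j → A (j.val + 1) - A (i.val + 1) ≠ 0) (x : Fin n → S) :
    Matrix.det (Matrix.of fun i j : Fin n =>
      (∏ k ∈ Icc 2 (j.val + 1), (x i + B k)) * ∏ k ∈ Icc (j.val + 2) n, (x i + A k)) =
    (∏ i : Fin n, ∏ j ∈ Ioi i, (x i - x j)) *
      ∏ i : Fin n, ∏ k ∈ Icc 2 (i.val + 1), (B k - A (i.val + 1)) := by
  rw [det_eq_vdm_mul_T n A B x, det_Tmat n A B hA]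
  have h1 : (∏ i : Fin n, ∏ j ∈ Ioi i, (x i - x j)) =
      (∏ i : Fin n, ∏ j ∈ Ioi i, (-1 : S)) * ∏ i : Fin n, ∏ j ∈ Ioi i, (x j - x i) := by
    rw [← prod_neg_pair (fun i j => x j - x i)]
    exact Finset.prod_congr rfl fun i _ => Finset.prod_congr rfl fun j _ => by ring
  rw [h1]
  ring

lemma triangle_reindex (n : ℕ) (g : ℕ → ℕ → S) :
    ∏ i : Fin n, ∏ k ∈ Icc 2 (i.val + 1), g k (i.val + 1) =
      ∏ a ∈ Icc 2 n, ∏ b ∈ Icc a n, g a b := by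
  rw [Fin.prod_univ_eq_prod_range (fun m => ∏ k ∈ Icc 2 (m + 1), g k (m + 1)) n]
  rw [Finset.prod_comm' (s := range n) (t := fun m => Icc 2 (m + 1)) (t' := Icc 2 n)
    (s' := fun k => Ico (k - 1) n)
    (fun m k => by simp only [mem_range, mem_Icc, mem_Ico]; omega)]
  refine Finset.prod_congr rfl fun a ha => ?_
  have ha' := Finset.mem_Icc.mp ha
  rw [Finset.prod_Ico_eq_prod_range]
  rw [show Icc a n = Ico a (n + 1) from by rw [Finset.Ico_add_one_right_eq_Icc],
    Finset.prod_Ico_eq_prod_range]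
  have hcard : n - (a - 1) = n + 1 - a := by omega
  rw [hcard]
  refine Finset.prod_congr rfl fun m _ => ?_
  congr 1
  omega


lemma prod_neg' (s : Finset ℕ) (f : ℕ → S) :
    ∏ k ∈ s, (-(f k)) = (-1 : S) ^ s.card * ∏ k ∈ s, f k := by
  rw [← Finset.prod_const, ← Finset.prod_mul_distrib]
  exact Finset.prod_congr rfl fun k _ => by ring

/-! ### The main identity over a polynomial ring containing 1/2 -/

abbrev Idx : Type := ℕ ⊕ (ℕ ⊕ (ℕ ⊕ Unit))
abbrev D : Type := MvPolynomial Idx ℚ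

noncomputable def Yv (i : ℕ) : D := MvPolynomial.X (Sum.inl i)
noncomputable def Ev (i : ℕ) : D := MvPolynomial.X (Sum.inr (Sum.inl i))
noncomputable def Fv (i : ℕ) : D := MvPolynomial.X (Sum.inr (Sum.inr (Sum.inl i)))
noncomputable def Cv : D := MvPolynomial.X (Sum.inr (Sum.inr (Sum.inr ())))
noncomputable def hv : D := Cv * MvPolynomial.C (1/2 : ℚ)

lemma hv2 : hv + hv = Cv := by
  rw [hv, ← mul_add, ← MvPolynomial.C_add]
  norm_num

lemma hA_ne (n : ℕ) (i j : Fin n) (hij : i < j) :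
    (Ev (j.val + 1) + hv) ^ 2 - (Ev (i.val + 1) + hv) ^ 2 ≠ 0 := by
  intro hzero
  have := congrArg (MvPolynomial.eval
    (fun s : Idx => if s = Sum.inr (Sum.inl (j.val + 1)) then (1 : ℚ) else 0)) hzero
  simp only [Ev, hv, Cv, map_sub, map_pow, map_add, map_mul, MvPolynomial.eval_X,
    MvPolynomial.eval_C, map_zero] at this
  have hne2 : i.val + 1 ≠ j.val + 1 := by omega
  simp [hne2, Fin.val_injective.ne (ne_of_lt hij)] at this


lemma mainD (n : ℕ) :
    Matrix.det (Matrix.of fun i j : Fin n =>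
      (∏ k ∈ Finset.Icc 2 (j.val + 1),
        (Yv (i.val + 1) + Fv k) * (Yv (i.val + 1) - Fv k - Cv)) *
      (∏ k ∈ Finset.Icc (j.val + 2) n,
        (Yv (i.val + 1) + Ev k) * (Yv (i.val + 1) - Ev k - Cv))) =
    (∏ i : Fin n, ∏ j ∈ Finset.Ioi i,
        (Yv (i.val + 1) - Yv (j.val + 1)) * (Cv - Yv (i.val + 1) - Yv (j.val + 1))) *
    (∏ i ∈ Finset.Icc 2 n, ∏ j ∈ Finset.Icc i n, (Fv i - Ev j) * (Fv i + Ev j + Cv)) := by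
  have hA' : ∀ i j : Fin n, i < j →
      (fun k => (Ev k + hv) ^ 2) (j.val + 1) - (fun k => (Ev k + hv) ^ 2) (i.val + 1) ≠ 0 :=
    fun i j hij => hA_ne n i j hij
  have hMeq : (Matrix.of fun i j : Fin n =>
      (∏ k ∈ Finset.Icc 2 (j.val + 1),
        (Yv (i.val + 1) + Fv k) * (Yv (i.val + 1) - Fv k - Cv)) *
      (∏ k ∈ Finset.Icc (j.val + 2) n,
        (Yv (i.val + 1) + Ev k) * (Yv (i.val + 1) - Ev k - Cv))) =
      ((-1 : D) ^ (n - 1)) • (Matrix.of fun i j : Fin n =>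
        (∏ k ∈ Icc 2 (j.val + 1), (-(Yv (i.val + 1) - hv) ^ 2 + (Fv k + hv) ^ 2)) *
        ∏ k ∈ Icc (j.val + 2) n, (-(Yv (i.val + 1) - hv) ^ 2 + (Ev k + hv) ^ 2)) := by
    ext i j
    simp only [Matrix.of_apply, Matrix.smul_apply, smul_eq_mul]
    have e1 : ∀ k, (Yv (i.val + 1) + Fv k) * (Yv (i.val + 1) - Fv k - Cv) =
        -(-(Yv (i.val + 1) - hv) ^ 2 + (Fv k + hv) ^ 2) := by
      intro k; rw [← hv2]; ring
    have e2 : ∀ k, (Yv (i.val + 1) + Ev k) * (Yv (i.val + 1) - Ev k - Cv) =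
        -(-(Yv (i.val + 1) - hv) ^ 2 + (Ev k + hv) ^ 2) := by
      intro k; rw [← hv2]; ring
    rw [Finset.prod_congr rfl (fun k _ => e1 k), Finset.prod_congr rfl (fun k _ => e2 k),
      prod_neg', prod_neg']
    have hc : (Icc 2 (j.val + 1)).card + (Icc (j.val + 2) n).card = n - 1 := by
      rw [Nat.card_Icc, Nat.card_Icc]
      have := j.isLt
      omega
    rw [mul_mul_mul_comm, ← pow_add, hc]
  rw [hMeq, Matrix.det_smul]
  have hone : ((-1 : D) ^ (n - 1)) ^ Fintype.card (Fin n) = 1 := by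
    rw [Fintype.card_fin, ← pow_mul]
    refine Even.neg_one_pow ?_
    rcases n with _ | m
    · simp
    · simpa using Nat.even_mul_succ_self m
  rw [hone, one_mul]
  rw [det_full n (fun k => (Ev k + hv) ^ 2) (fun k => (Fv k + hv) ^ 2) hA'
    (fun i => -(Yv (i.val + 1) - hv) ^ 2)]
  congr 1
  · refine Finset.prod_congr rfl fun i _ => Finset.prod_congr rfl fun j _ => ?_
    rw [← hv2]; ring
  · rw [← triangle_reindex n (fun a b => (Fv a - Ev b) * (Fv a + Ev b + Cv))]
    refine Finset.prod_congr rfl fun i _ => Finset.prod_congr rfl fun k _ => ?_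
    rw [← hv2]; ring

/-! ### Transfer to arbitrary commutative rings -/

def lhs (S : Type*) [CommRing S] (n : ℕ) (Y E F : ℕ → S) (C : S) : S :=
  Matrix.det (Matrix.of fun i j : Fin n =>
    (∏ k ∈ Finset.Icc 2 (j.val + 1), (Y (i.val + 1) + F k) * (Y (i.val + 1) - F k - C)) *
    (∏ k ∈ Finset.Icc (j.val + 2) n, (Y (i.val + 1) + E k) * (Y (i.val + 1) - E k - C)))

def rhs (S : Type*) [CommRing S] (n : ℕ) (Y E F : ℕ → S) (C : S) : S :=
  (∏ i : Fin n, ∏ j ∈ Finset.Ioi i,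
      (Y (i.val + 1) - Y (j.val + 1)) * (C - Y (i.val + 1) - Y (j.val + 1))) *
  (∏ i ∈ Finset.Icc 2 n, ∏ j ∈ Finset.Icc i n, (F i - E j) * (F i + E j + C))

lemma map_lhs {S S' : Type*} [CommRing S] [CommRing S'] (φ : S →+* S') (n : ℕ)
    (Y E F : ℕ → S) (C : S) :
    φ (lhs S n Y E F C) = lhs S' n (φ ∘ Y) (φ ∘ E) (φ ∘ F) (φ C) := by
  unfold lhs
  rw [RingHom.map_det]
  congr 1
  ext i j
  simp [Matrix.map_apply, map_prod, Function.comp]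

lemma map_rhs {S S' : Type*} [CommRing S] [CommRing S'] (φ : S →+* S') (n : ℕ)
    (Y E F : ℕ → S) (C : S) :
    φ (rhs S n Y E F C) = rhs S' n (φ ∘ Y) (φ ∘ E) (φ ∘ F) (φ C) := by
  unfold rhs
  simp [map_prod, Function.comp]

abbrev Z : Type := MvPolynomial Idx ℤ

noncomputable def Yz (i : ℕ) : Z := MvPolynomial.X (Sum.inl i)
noncomputable def Ez (i : ℕ) : Z := MvPolynomial.X (Sum.inr (Sum.inl i))
noncomputable def Fz (i : ℕ) : Z := MvPolynomial.X (Sum.inr (Sum.inr (Sum.inl i)))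
noncomputable def Cz : Z := MvPolynomial.X (Sum.inr (Sum.inr (Sum.inr ())))

lemma mainZ (n : ℕ) : lhs Z n Yz Ez Fz Cz = rhs Z n Yz Ez Fz Cz := by
  apply MvPolynomial.map_injective (Int.castRingHom ℚ) Int.cast_injective
  rw [map_lhs, map_rhs]
  have hY : (MvPolynomial.map (Int.castRingHom ℚ)) ∘ Yz = Yv := by
    funext i; simp [Yz, Yv]
  have hE : (MvPolynomial.map (Int.castRingHom ℚ)) ∘ Ez = Ev := by
    funext i; simp [Ez, Ev]
  have hF : (MvPolynomial.map (Int.castRingHom ℚ)) ∘ Fz = Fv := by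
    funext i; simp [Fz, Fv]
  have hC : (MvPolynomial.map (Int.castRingHom ℚ)) Cz = Cv := by
    simp [Cz, Cv]
  rw [hY, hE, hF, hC]
  exact mainD n

lemma mainR (R : Type*) [CommRing R] (n : ℕ) (Y E F : ℕ → R) (C : R) :
    lhs R n Y E F C = rhs R n Y E F C := by
  classical
  let g : Idx → R := fun s =>
    match s with
    | Sum.inl i => Y i
    | Sum.inr (Sum.inl i) => E i
    | Sum.inr (Sum.inr (Sum.inl i)) => F i
    | Sum.inr (Sum.inr (Sum.inr _)) => C
  let φ : Z →+* R := MvPolynomial.eval₂Hom (Int.castRingHom R) g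
  have := congrArg φ (mainZ n)
  rw [map_lhs, map_rhs] at this
  have hY : φ ∘ Yz = Y := by funext i; simp [φ, Yz, g]
  have hE : φ ∘ Ez = E := by funext i; simp [φ, Ez, g]
  have hF : φ ∘ Fz = F := by funext i; simp [φ, Fz, g]
  have hC : φ Cz = C := by simp [φ, Cz, g]
  rwa [hY, hE, hF, hC] at this

end K9

/-- A special case of Krattenthaler's Lemma 9: the determinant of the matrix
with (i,j) entry `∏_{k=2}^j (Y_i+F_k)(Y_i−F_k−C) · ∏_{k=j+1}^n (Y_i+E_k)(Y_i−E_k−C)`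
equals `∏_{i<j}(Y_i−Y_j)(C−Y_i−Y_j) · ∏_{2≤i≤j≤n}(F_i−E_j)(F_i+E_j+C)`.
Indices are 1-based. -/
theorem krattenthaler_lemma9 (R : Type*) [CommRing R] (n : ℕ) (Y E F : ℕ → R) (C : R) :
    Matrix.det (Matrix.of fun i j : Fin n =>
      (∏ k ∈ Finset.Icc 2 (j.val + 1), (Y (i.val + 1) + F k) * (Y (i.val + 1) - F k - C)) *
      (∏ k ∈ Finset.Icc (j.val + 2) n, (Y (i.val + 1) + E k) * (Y (i.val + 1) - E k - C))) =
    (∏ i : Fin n, ∏ j ∈ Finset.Ioi i,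
        (Y (i.val + 1) - Y (j.val + 1)) * (C - Y (i.val + 1) - Y (j.val + 1))) *
    (∏ i ∈ Finset.Icc 2 n, ∏ j ∈ Finset.Icc i n, (F i - E j) * (F i + E j + C)) :=
  K9.mainR R n Y E F C
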